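/- In unlabeled chip-firing on the infinite k-ary tree with a self-loop at the root, starting with N chips at the root where (k^ℓ-1)/(k-1) ≤ N < (k^{ℓ+1}-1)/(k-1), the stable configuration places a_i + 1 chips on each vertex of layer i+1 for 0 ≤ i ≤ ℓ-1, where a_{ℓ-1}⋯a_1a_0 is the base-k expansion of N - (k^ℓ-1)/(k-1). In particular, the total chip count is conserved: N = ∑_{i=0}^{ℓ-1} (a_i + 1)·k^i. -/

import Mathlib

/-- `Ncount k ℓ = (k^ℓ - 1)/(k - 1)`.  With breadth-first indexing of the
infinite `k`-ary tree (root `0`, children of `v` are `k*v+1,…,k*v+k`),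
layer `i+1` consists of the vertices `v` with `Ncount k i ≤ v < Ncount k (i+1)`
(the root is the unique vertex of layer 1). -/
def Ncount (k l : ℕ) : ℕ := (k ^ l - 1) / (k - 1)


section Basic
variable {k : ℕ} (hk : 2 ≤ k)
include hk

lemma geom_mul (l : ℕ) : (k - 1) * ∑ i ∈ Finset.range l, k ^ i = k ^ l - 1 := by
  induction l with
  | zero => simp
  | succ n ih =>
    rw [Finset.sum_range_succ, Nat.mul_add, ih]
    have h1 : 1 ≤ k ^ n := Nat.one_le_pow _ _ (by omega)
    have h2 : k ^ (n+1) = k * k ^ n := by ring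
    have h3 : (k - 1) * k ^ n + k ^ n = k * k ^ n := by
      rw [← Nat.succ_mul, Nat.succ_eq_add_one]; congr 1; omega
    omega

lemma Ncount_sum (l : ℕ) : Ncount k l = ∑ i ∈ Finset.range l, k ^ i := by
  rw [Ncount, ← geom_mul hk, Nat.mul_div_cancel_left _ (by omega)]

lemma Ncount_succ (l : ℕ) : Ncount k (l + 1) = k * Ncount k l + 1 := by
  rw [Ncount_sum hk, Ncount_sum hk, Finset.sum_range_succ', Finset.mul_sum]
  simp [pow_succ, mul_comm]

omit hk in
lemma Ncount_zero : Ncount k 0 = 0 := by simp [Ncount]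

lemma Ncount_one : Ncount k 1 = 1 := by
  rw [Ncount_succ hk, Ncount_zero]; ring

lemma Ncount_mono : Monotone (Ncount k) := by
  apply monotone_nat_of_le_succ
  intro n; rw [Ncount_succ hk]; nlinarith [Ncount k n]

lemma Ncount_le_iff (i v : ℕ) : Ncount k i ≤ v ↔ k ^ i ≤ (k - 1) * v + 1 := by
  have h : (k - 1) * Ncount k i = k ^ i - 1 := by
    rw [Ncount_sum hk, geom_mul hk]
  have h1 : 1 ≤ k ^ i := Nat.one_le_pow _ _ (by omega)
  constructor
  · intro hle
    have := Nat.mul_le_mul_left (k - 1) hle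
    omega
  · intro hle
    by_contra hlt
    push_neg at hlt
    have h2 := Nat.mul_le_mul_left (k - 1) (show v + 1 ≤ Ncount k i from hlt)
    have h4 : (k - 1) * (v + 1) = (k - 1) * v + (k - 1) := by ring
    omega

/-- depth of vertex `v` (root has depth 0) -/
def dep (k v : ℕ) : ℕ := Nat.log k ((k - 1) * v + 1)

lemma dep_spec (v : ℕ) : Ncount k (dep k v) ≤ v ∧ v < Ncount k (dep k v + 1) := by
  have hx : (k - 1) * v + 1 ≠ 0 := by omega
  have h1 := Nat.pow_log_le_self k hx
  have h2 : (k - 1) * v + 1 < k ^ (dep k v + 1) :=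
    Nat.lt_pow_succ_log_self (by omega) _
  constructor
  · rw [Ncount_le_iff hk]; exact h1
  · rw [← Nat.not_le, Ncount_le_iff hk]; omega

lemma dep_eq_iff (i v : ℕ) : dep k v = i ↔ (Ncount k i ≤ v ∧ v < Ncount k (i + 1)) := by
  constructor
  · rintro rfl; exact dep_spec hk v
  · rintro ⟨h1, h2⟩
    obtain ⟨h3, h4⟩ := dep_spec hk v
    by_contra hne
    rcases Nat.lt_or_ge (dep k v) i with h | h
    · have := Ncount_mono hk (show dep k v + 1 ≤ i by omega)
      omega
    · have := Ncount_mono hk (show i + 1 ≤ dep k v by omega)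
      omega

lemma dep_zero : dep k 0 = 0 := by
  rw [dep_eq_iff hk, Ncount_zero, Ncount_one hk]; omega

lemma dep_pos_iff (v : ℕ) : 1 ≤ v ↔ 1 ≤ dep k v := by
  constructor
  · intro hv
    by_contra h
    have h0 : dep k v = 0 := by omega
    rw [dep_eq_iff hk, Ncount_one hk] at h0
    omega
  · intro hd
    obtain ⟨h1, _⟩ := dep_spec hk v
    have := Ncount_mono hk hd
    rw [Ncount_one hk] at this
    omega

lemma dep_child (v t : ℕ) (ht1 : 1 ≤ t) (ht2 : t ≤ k) : dep k (k * v + t) = dep k v + 1 := by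
  obtain ⟨h1, h2⟩ := dep_spec hk v
  have hB : Ncount k (dep k v + 1) = k * Ncount k (dep k v) + 1 := Ncount_succ hk _
  have hC : Ncount k (dep k v + 1 + 1) = k * Ncount k (dep k v + 1) + 1 := Ncount_succ hk _
  have m1 := Nat.mul_le_mul_left k h1
  have m2 := Nat.mul_le_mul_left k (show v + 1 ≤ Ncount k (dep k v + 1) from h2)
  have e : k * (v + 1) = k * v + k := by ring
  rw [dep_eq_iff hk]
  omega

lemma dep_par (v : ℕ) (hv : 1 ≤ v) : dep k ((v - 1) / k) = dep k v - 1 := by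
  have hd := (dep_pos_iff hk v).1 hv
  obtain ⟨h1, h2⟩ := dep_spec hk v
  have e1 : Ncount k (dep k v) = k * Ncount k (dep k v - 1) + 1 := by
    rw [← Ncount_succ hk]; congr 1; omega
  have e3 : Ncount k (dep k v + 1) = k * Ncount k (dep k v) + 1 := Ncount_succ hk _
  rw [dep_eq_iff hk]
  have e2 : Ncount k (dep k v - 1 + 1) = Ncount k (dep k v) := by congr 1; omega
  rw [e2]
  have c1 : Ncount k (dep k v - 1) * k = k * Ncount k (dep k v - 1) := Nat.mul_comm _ _
  have c2 : Ncount k (dep k v) * k = k * Ncount k (dep k v) := Nat.mul_comm _ _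
  constructor
  · rw [Nat.le_div_iff_mul_le (by omega)]; omega
  · rw [Nat.div_lt_iff_lt_mul (by omega)]; omega

lemma par_eq_iff (v w : ℕ) (hw : 1 ≤ w) :
    v = (w - 1) / k ↔ (k * v + 1 ≤ w ∧ w ≤ k * v + k) := by
  constructor
  · rintro rfl
    have hdm := Nat.div_add_mod (w - 1) k
    have hm := Nat.mod_lt (w - 1) (show 0 < k by omega)
    omega
  · rintro ⟨ha, hb⟩
    have c : v * k = k * v := Nat.mul_comm _ _
    exact (Nat.div_eq_of_lt_le (by omega) (by rw [Nat.succ_mul]; omega)).symm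

end Basic

/-- The parent of vertex `v`; the root is its own parent (self-loop). -/
def par (k v : ℕ) : ℕ := if v = 0 then 0 else (v - 1) / k

/-- The number of edges from vertex `v` to vertex `w` (as a neighbor to which a
fired chip is sent): one if `w` is the parent of `v` (including the root's
self-loop) and one if `w` is a child of `v`. -/
def nbr (k v w : ℕ) : ℕ :=
  (if w = par k v then 1 else 0) + (if k * v + 1 ≤ w ∧ w ≤ k * v + k then 1 else 0)

/-- The result of firing vertex `v`: `v` loses `k+1` chips and each of its
`k+1` incident edges (counting the root's self-loop) carries one chip to the
corresponding endpoint. -/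
def fireAt (k v : ℕ) (c : ℕ → ℕ) : ℕ → ℕ :=
  fun w => c w + nbr k v w - (if w = v then k + 1 else 0)

/-- One legal unlabeled chip-firing move: some vertex with at least `k+1`
chips fires. -/
def UStep (k : ℕ) (c c' : ℕ → ℕ) : Prop := ∃ v, k + 1 ≤ c v ∧ c' = fireAt k v c

/-- A configuration is stable when every vertex has at most `k` chips. -/
def UStable (k : ℕ) (c : ℕ → ℕ) : Prop := ∀ v, c v ≤ k


section Main
variable {k : ℕ} (hk : 2 ≤ k)
include hk

lemma Ncount_add_pow (l : ℕ) : Ncount k (l + 1) = Ncount k l + k ^ l := by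
  rw [Ncount_sum hk, Ncount_sum hk, Finset.sum_range_succ]

lemma par_pos (v : ℕ) (hv : 1 ≤ v) : par k v = (v - 1) / k := if_neg (by omega)

lemma nbr_same_dep (v w : ℕ) (hd : dep k v = dep k w) (hne : v ≠ w) : nbr k v w = 0 := by
  rcases Nat.eq_zero_or_pos v with rfl | hv
  · rw [dep_zero hk] at hd
    have : ¬ (1 ≤ w) := by
      intro h; have := (dep_pos_iff hk w).1 h; omega
    omega
  · have hdv := (dep_pos_iff hk v).1 hv
    unfold nbr
    rw [par_pos hk v hv]
    have hc1 : ¬ (w = (v - 1) / k) := by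
      intro h
      rw [h] at hd
      have := dep_par hk v hv
      omega
    have hc2 : ¬ (k * v + 1 ≤ w ∧ w ≤ k * v + k) := by
      rintro ⟨h1, h2⟩
      have : dep k w = dep k v + 1 := by
        have := dep_child hk v (w - k * v) (by omega) (by omega)
        rwa [show k * v + (w - k * v) = w by omega] at this
      omega
    rw [if_neg hc1, if_neg hc2]

lemma nbr_self (v : ℕ) (hv : 1 ≤ v) : nbr k v v = 0 := by
  unfold nbr
  rw [par_pos hk v hv]
  have h2 : (v - 1) / k ≤ v - 1 := Nat.div_le_self _ _
  have h3 : v ≤ k * v := Nat.le_mul_of_pos_left v (by omega)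
  rw [if_neg (by omega), if_neg (by omega)]

omit hk in
lemma fire_add (v : ℕ) (c d : ℕ → ℕ) (hv : k + 1 ≤ c v) :
    fireAt k v (fun w => c w + d w) = fun w => fireAt k v c w + d w := by
  funext w
  by_cases h : w = v
  · subst h; simp only [fireAt]; split_ifs <;> omega
  · simp only [fireAt]; split_ifs <;> omega

omit hk in
lemma reach_add (c c' d : ℕ → ℕ) (h : Relation.ReflTransGen (UStep k) c c') :
    Relation.ReflTransGen (UStep k) (fun w => c w + d w) (fun w => c' w + d w) := by
  induction h with
  | refl => exact .refl
  | tail _ hstep ih =>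
    obtain ⟨v, hv, rfl⟩ := hstep
    exact ih.tail ⟨v, by simpa using Nat.le_add_right_of_le hv, (fire_add v _ d hv).symm⟩

omit hk in
lemma fire_comm (v w : ℕ) (c : ℕ → ℕ) (hv : k + 1 ≤ c v) (hw : k + 1 ≤ c w) (hvw : v ≠ w) :
    fireAt k w (fireAt k v c) = fireAt k v (fireAt k w c) := by
  funext u
  by_cases h1 : u = v <;> by_cases h2 : u = w
  · exact absurd (h1.symm.trans h2) hvw
  · subst h1; simp only [fireAt]; split_ifs <;> omega
  · subst h2; simp only [fireAt]; split_ifs <;> omega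
  · simp only [fireAt]; split_ifs <;> omega

omit hk in
lemma ustep_diamond (c c1 c2 : ℕ → ℕ) (h1 : UStep k c c1) (h2 : UStep k c c2) :
    ∃ d, Relation.ReflGen (UStep k) c1 d ∧ Relation.ReflTransGen (UStep k) c2 d := by
  obtain ⟨v, hv, rfl⟩ := h1
  obtain ⟨w, hw, rfl⟩ := h2
  by_cases hvw : v = w
  · subst hvw; exact ⟨fireAt k v c, .refl, .refl⟩
  · refine ⟨fireAt k w (fireAt k v c), .single ⟨w, ?_, rfl⟩, .single ⟨v, ?_, ?_⟩⟩
    · simp only [fireAt]; split_ifs <;> omega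
    · simp only [fireAt]; split_ifs <;> omega
    · exact fire_comm v w c hv hw hvw

omit hk in
lemma stable_reach_eq (c d : ℕ → ℕ) (hs : UStable k c)
    (h : Relation.ReflTransGen (UStep k) c d) : d = c := by
  rcases Relation.ReflTransGen.cases_head h with rfl | ⟨e, he, _⟩
  · rfl
  · obtain ⟨v, hv, _⟩ := he
    have := hs v
    omega

/-- radial configuration -/
def rad (k : ℕ) (g : ℕ → ℕ) : ℕ → ℕ := fun v => g (dep k v)

omit hk in
lemma fireRange (A n : ℕ) (c : ℕ → ℕ)
    (hfire : ∀ t, t < n → k + 1 ≤ c (A + t))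
    (hnadj : ∀ s t, s < n → t < n → s ≠ t → nbr k (A + s) (A + t) = 0) :
    Relation.ReflTransGen (UStep k) c
      (fun w => c w + (∑ t ∈ Finset.range n, nbr k (A + t) w) -
        if A ≤ w ∧ w < A + n then k + 1 else 0) := by
  induction n with
  | zero =>
    have he : (fun w => c w + (∑ t ∈ Finset.range 0, nbr k (A + t) w) -
        if A ≤ w ∧ w < A + 0 then k + 1 else 0) = c := by
      funext w; rw [if_neg (by omega)]; simp
    rw [he]
  | succ n ih =>
    have hx : ∀ w, A ≤ w → w < A + n → k + 1 ≤ c w := by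
      intro w hw1 hw2
      have := hfire (w - A) (by omega)
      rwa [show A + (w - A) = w by omega] at this
    have hs0 : ∑ t ∈ Finset.range n, nbr k (A + t) (A + n) = 0 :=
      Finset.sum_eq_zero (fun t ht => hnadj t n (by have := Finset.mem_range.1 ht; omega)
        (by omega) (by have := Finset.mem_range.1 ht; omega))
    refine Relation.ReflTransGen.tail
      (ih (fun t ht => hfire t (by omega)) (fun s t hs ht => hnadj s t (by omega) (by omega)))
      ⟨A + n, ?_, ?_⟩
    · show k + 1 ≤ c (A + n) + (∑ t ∈ Finset.range n, nbr k (A + t) (A + n)) -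
        if A ≤ A + n ∧ A + n < A + n then k + 1 else 0
      rw [hs0, if_neg (by omega)]
      simpa using hfire n (by omega)
    · funext w
      simp only [fireAt]
      rw [Finset.sum_range_succ]
      by_cases h2 : A ≤ w ∧ w < A + n
      · have := hx w h2.1 h2.2
        split_ifs <;> omega
      · split_ifs <;> omega

lemma layerSum (j w : ℕ) :
    ∑ t ∈ Finset.range (k ^ (j + 1)), nbr k (Ncount k (j + 1) + t) w =
      (if dep k w = j then k else 0) + (if dep k w = j + 2 then 1 else 0) := by
  have hA1 : 1 ≤ Ncount k (j + 1) := by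
    have := Ncount_mono hk (show 1 ≤ j + 1 by omega)
    rw [Ncount_one hk] at this; omega
  have hAB : Ncount k (j + 2) = Ncount k (j + 1) + k ^ (j + 1) := Ncount_add_pow hk (j + 1)
  have hsum : ∑ t ∈ Finset.range (k ^ (j + 1)), nbr k (Ncount k (j + 1) + t) w =
      ∑ v ∈ Finset.Ico (Ncount k (j + 1)) (Ncount k (j + 2)), nbr k v w := by
    rw [Finset.sum_Ico_eq_sum_range,
      show Ncount k (j + 2) - Ncount k (j + 1) = k ^ (j + 1) by omega]
  rw [hsum]
  unfold nbr
  rw [Finset.sum_add_distrib]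
  congr 1
  · -- parent part: counts children of w inside the layer
    have hstep : ∀ v ∈ Finset.Ico (Ncount k (j + 1)) (Ncount k (j + 2)),
        (if w = par k v then 1 else 0) =
        (if v ∈ Finset.Ico (k * w + 1) (k * w + k + 1) then (1:ℕ) else 0) := by
      intro v hv
      rw [Finset.mem_Ico] at hv
      have hv1 : 1 ≤ v := le_trans hA1 hv.1
      rw [par_pos hk v hv1]
      by_cases h : w = (v - 1) / k
      · rw [if_pos h, if_pos (Finset.mem_Ico.2
          (by have := (par_eq_iff hk w v hv1).1 h; omega))]
      · rw [if_neg h, if_neg (fun hc => by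
          rw [Finset.mem_Ico] at hc
          exact h ((par_eq_iff hk w v hv1).2 (by omega)))]
    rw [Finset.sum_congr rfl hstep, Finset.sum_ite_mem, Finset.sum_const, smul_eq_mul, mul_one,
      Finset.Ico_inter_Ico, Nat.card_Ico]
    by_cases hdw : dep k w = j
    · rw [if_pos hdw]
      have hw := (dep_eq_iff hk j w).1 hdw
      have e1 : Ncount k (j + 1) = k * Ncount k j + 1 := Ncount_succ hk _
      have e2 : Ncount k (j + 2) = k * Ncount k (j + 1) + 1 := Ncount_succ hk _
      have m1 := Nat.mul_le_mul_left k hw.1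
      have m2 := Nat.mul_le_mul_left k (show w + 1 ≤ Ncount k (j + 1) from hw.2)
      have e3 : k * (w + 1) = k * w + k := by ring
      have hs : Ncount k (j + 1) ⊔ (k * w + 1) = k * w + 1 := by rw [sup_eq_right]; omega
      have hi : Ncount k (j + 2) ⊓ (k * w + k + 1) = k * w + k + 1 := by rw [inf_eq_right]; omega
      rw [hs, hi]; omega
    · rw [if_neg hdw]
      rcases Nat.lt_or_ge (dep k w) j with h | h
      · obtain ⟨_, hw2⟩ := dep_spec hk w
        have m2 := Nat.mul_le_mul_left k (show w + 1 ≤ Ncount k (dep k w + 1) from hw2)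
        have e3 : k * (w + 1) = k * w + k := by ring
        have e1 : Ncount k (dep k w + 1 + 1) = k * Ncount k (dep k w + 1) + 1 := Ncount_succ hk _
        have hmono := Ncount_mono hk (show dep k w + 1 + 1 ≤ j + 1 by omega)
        have h1 : k * w + k + 1 ≤ Ncount k (j + 1) := by omega
        have h2 : (Ncount k (j + 2)) ⊓ (k * w + k + 1) ≤ k * w + k + 1 := inf_le_right
        have h3 : Ncount k (j + 1) ≤ Ncount k (j + 1) ⊔ (k * w + 1) := le_sup_left
        omega
      · obtain ⟨hw1, _⟩ := dep_spec hk w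
        have e1 : Ncount k (dep k w + 1) = k * Ncount k (dep k w) + 1 := Ncount_succ hk _
        have m1 := Nat.mul_le_mul_left k hw1
        have hmono := Ncount_mono hk (show j + 2 ≤ dep k w + 1 by omega)
        have h1 : Ncount k (j + 2) ≤ k * w + 1 := by omega
        have h2 : (Ncount k (j + 2)) ⊓ (k * w + k + 1) ≤ Ncount k (j + 2) := inf_le_left
        have h3 : k * w + 1 ≤ Ncount k (j + 1) ⊔ (k * w + 1) := le_sup_right
        omega
  · -- child part: counts the parent of w inside the layer
    rcases Nat.eq_zero_or_pos w with rfl | hw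
    · rw [if_neg (by rw [dep_zero hk]; omega), Finset.sum_eq_zero (fun v hv => by
        rw [if_neg (by omega)])]
    · have hstep : ∀ v ∈ Finset.Ico (Ncount k (j + 1)) (Ncount k (j + 2)),
          (if k * v + 1 ≤ w ∧ w ≤ k * v + k then 1 else 0) =
          (if v = (w - 1) / k then (1:ℕ) else 0) := by
        intro v _
        by_cases h : v = (w - 1) / k
        · rw [if_pos ((par_eq_iff hk v w hw).1 h), if_pos h]
        · rw [if_neg (fun hc => h ((par_eq_iff hk v w hw).2 hc)), if_neg h]
      rw [Finset.sum_congr rfl hstep, Finset.sum_ite_eq']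
      have hdp := dep_par hk w hw
      have hdw := (dep_pos_iff hk w).1 hw
      by_cases h : dep k w = j + 2
      · rw [if_pos, if_pos h]
        rw [Finset.mem_Ico]
        have hd : dep k ((w - 1) / k) = j + 1 := by omega
        exact (dep_eq_iff hk _ _).1 hd
      · rw [if_neg, if_neg h]
        rw [Finset.mem_Ico]
        intro hc
        have := (dep_eq_iff hk (j + 1) ((w - 1) / k)).2 hc
        omega

end Main

section Main2
variable {k : ℕ} (hk : 2 ≤ k)
include hk

lemma upWave : ∀ (j : ℕ) (g : ℕ → ℕ), g j = k + 1 → (∀ i, i < j → g i = 1) →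
    Relation.ReflTransGen (UStep k) (rad k g)
      (rad k fun i => if i ≤ j then 1 else if i = j + 1 then g (j + 1) + 1 else g i) := by
  intro j
  induction j with
  | zero =>
    intro g hj _
    have hN2 : Ncount k 2 = k + 1 := by
      rw [Ncount_succ hk, Ncount_one hk]; ring
    refine Relation.ReflTransGen.single ⟨0, ?_, ?_⟩
    · show k + 1 ≤ g (dep k 0)
      rw [dep_zero hk, hj]
    · have hnbr : ∀ w, nbr k 0 w =
          (if w = 0 then 1 else 0) + (if 1 ≤ w ∧ w ≤ k then 1 else 0) := by
        intro w; unfold nbr par; norm_num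
      funext w
      simp only [rad, fireAt, hnbr]
      by_cases hw0 : w = 0
      · subst hw0
        rw [dep_zero hk]
        norm_num
        first
        | omega
        | (split_ifs <;> omega)
      · have hw1 : 1 ≤ w := by omega
        have hdw : 1 ≤ dep k w := (dep_pos_iff hk w).1 hw1
        by_cases hd1 : dep k w = 1
        · have hmem := (dep_eq_iff hk 1 w).1 hd1
          rw [Ncount_one hk] at hmem
          have hupp : Ncount k (1 + 1) = k + 1 := hN2
          rw [hd1]
          norm_num
          first
          | omega
          | (split_ifs <;> omega)
        · have hnm : ¬ (1 ≤ w ∧ w ≤ k) := by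
            intro hc
            refine hd1 ((dep_eq_iff hk 1 w).2 ?_)
            rw [Ncount_one hk]
            exact ⟨by omega, by rw [hN2]; omega⟩
          norm_num
          first
          | omega
          | (split_ifs <;> omega)
  | succ j ih =>
    intro g hj hlow
    have hAB : Ncount k (j + 2) = Ncount k (j + 1) + k ^ (j + 1) := Ncount_add_pow hk (j + 1)
    have hdepA : ∀ t, t < k ^ (j + 1) → dep k (Ncount k (j + 1) + t) = j + 1 := by
      intro t ht
      refine (dep_eq_iff hk _ _).2 ⟨by omega, ?_⟩
      rw [show j + 1 + 1 = j + 2 by omega, hAB]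
      omega
    have hcond : ∀ w, (Ncount k (j + 1) ≤ w ∧ w < Ncount k (j + 1) + k ^ (j + 1)) ↔
        dep k w = j + 1 := by
      intro w
      rw [dep_eq_iff hk, show j + 1 + 1 = j + 2 by omega, hAB]
    have step1 := fireRange (k := k) (Ncount k (j + 1)) (k ^ (j + 1)) (rad k g)
      (fun t ht => by
        show k + 1 ≤ g (dep k (Ncount k (j + 1) + t))
        rw [hdepA t ht, hj])
      (fun s t hs ht hne => nbr_same_dep hk _ _ (by rw [hdepA s hs, hdepA t ht]) (by omega))
    have hres : (fun w => rad k g w +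
          (∑ t ∈ Finset.range (k ^ (j + 1)), nbr k (Ncount k (j + 1) + t) w) -
          if Ncount k (j + 1) ≤ w ∧ w < Ncount k (j + 1) + k ^ (j + 1) then k + 1 else 0) =
        rad k (fun i => if i = j then k + 1 else if i = j + 1 then 0
          else if i = j + 2 then g (j + 2) + 1 else g i) := by
      funext w
      simp only [rad]
      rw [layerSum hk j w]
      have hgj : g j = 1 := hlow j (by omega)
      by_cases h1 : dep k w = j + 1
      · rw [if_pos ((hcond w).2 h1), h1]
        split_ifs <;> omega
      · rw [if_neg (fun hc => h1 ((hcond w).1 hc))]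
        by_cases h0 : dep k w = j
        · rw [h0]
          split_ifs <;> omega
        · by_cases h2 : dep k w = j + 2
          · rw [h2]
            split_ifs <;> omega
          · split_ifs <;> omega
    have step2 := ih (fun i => if i = j then k + 1 else if i = j + 1 then 0
        else if i = j + 2 then g (j + 2) + 1 else g i)
      (by norm_num)
      (fun i hi => by
        have := hlow i (by omega)
        try simp only []
        split_ifs <;> omega)
    have hfinal : (fun i => if i ≤ j then 1
        else if i = j + 1 then
          (if j + 1 = j then k + 1 else if j + 1 = j + 1 then 0
            else if j + 1 = j + 2 then g (j + 2) + 1 else g (j + 1)) + 1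
        else if i = j then k + 1 else if i = j + 1 then 0
          else if i = j + 2 then g (j + 2) + 1 else g i) =
      (fun i => if i ≤ j + 1 then 1 else if i = j + 1 + 1 then g (j + 1 + 1) + 1 else g i) := by
      funext i
      rw [show j + 1 + 1 = j + 2 from rfl]
      try simp only []
      split_ifs <;> omega
    rw [hres] at step1
    rw [hfinal] at step2
    exact step1.trans step2

lemma cascade : ∀ (m : ℕ) (g : ℕ → ℕ), 1 ≤ m → g 0 = k + 1 →
    (∀ i, 1 ≤ i → i < m → g i = k) →
    Relation.ReflTransGen (UStep k) (rad k g)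
      (rad k fun i => if i < m then 1 else if i = m then g m + 1 else g i) := by
  intro m
  induction m with
  | zero => omega
  | succ m ih =>
    intro g _ h0 hmid
    rcases Nat.eq_zero_or_pos m with rfl | hm
    · have h := upWave hk 0 g h0 (by omega)
      have he : (fun i => if i ≤ 0 then 1 else if i = 0 + 1 then g (0 + 1) + 1 else g i) =
          (fun i => if i < 0 + 1 then 1 else if i = 0 + 1 then g (0 + 1) + 1 else g i) := by
        funext i
        try try simp only []
        split_ifs <;> omega
      rw [he] at h
      exact h
    · have step1 := ih g hm h0 (fun i hi1 hi2 => hmid i hi1 (by omega))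
      have hgm : g m = k := hmid m hm (by omega)
      have step2 := upWave hk m
        (fun i => if i < m then 1 else if i = m then g m + 1 else g i)
        (by try simp only []; split_ifs <;> omega)
        (fun i hi => by (try simp only []); split_ifs <;> omega)
      have hfin : (fun i => if i ≤ m then 1
          else if i = m + 1 then
            (if m + 1 < m then 1 else if m + 1 = m then g m + 1 else g (m + 1)) + 1
          else if i < m then 1 else if i = m then g m + 1 else g i) =
          (fun i => if i < m + 1 then 1 else if i = m + 1 then g (m + 1) + 1 else g i) := by
        funext i
        try try simp only []
        split_ifs <;> omega
      rw [hfin] at step2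
      exact step1.trans step2

lemma reach : ∀ (N l : ℕ) (b : ℕ → ℕ), 1 ≤ l → (∀ i, i < l → 1 ≤ b i ∧ b i ≤ k) →
    N = ∑ i ∈ Finset.range l, b i * k ^ i →
    Relation.ReflTransGen (UStep k) (fun w => if w = 0 then N else 0)
      (rad k fun i => if i < l then b i else 0) := by
  intro N
  induction N using Nat.strong_induction_on with
  | _ N IH =>
  intro l b hl hb hN
  have hN1 : 1 ≤ N := by
    have h0 : b 0 * k ^ 0 ≤ ∑ i ∈ Finset.range l, b i * k ^ i :=
      Finset.single_le_sum (f := fun i => b i * k ^ i) (fun i _ => Nat.zero_le _)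
        (Finset.mem_range.2 (show 0 < l by omega))
    have := (hb 0 (by omega)).1
    simp only [pow_zero, mul_one] at h0
    omega
  by_cases hb0 : 2 ≤ b 0
  · -- decrement the first digit
    obtain ⟨l', rfl⟩ : ∃ l', l = l' + 1 := ⟨l - 1, by omega⟩
    have hsum' : N - 1 = ∑ i ∈ Finset.range (l' + 1),
        (fun i => if i = 0 then b 0 - 1 else b i) i * k ^ i := by
      rw [Finset.sum_range_succ'] at hN ⊢
      have ht : ∑ i ∈ Finset.range l',
          (fun i => if i = 0 then b 0 - 1 else b i) (i + 1) * k ^ (i + 1) =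
          ∑ i ∈ Finset.range l', b (i + 1) * k ^ (i + 1) :=
        Finset.sum_congr rfl (fun i _ => by norm_num)
      rw [ht]
      norm_num
      norm_num at hN
      omega
    have hb'' : ∀ i, i < l' + 1 → 1 ≤ (fun i => if i = 0 then b 0 - 1 else b i) i ∧
        (fun i => if i = 0 then b 0 - 1 else b i) i ≤ k := by
      intro i hi
      by_cases h : i = 0
      · simp only [if_pos h]; have := (hb 0 (by omega)).2; omega
      · simp only [if_neg h]; exact hb i hi
    have step := IH (N - 1) (by omega) (l' + 1) _ (by omega) hb'' hsum'
    have step2 := reach_add (k := k) _ _ (fun w => if w = 0 then 1 else 0) step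
    have e1 : (fun w => (if w = 0 then N - 1 else 0) + (if w = 0 then 1 else 0)) =
        (fun w => if w = 0 then N else 0) := by
      funext w; split_ifs <;> omega
    have e2 : (fun w => rad k (fun i => if i < l' + 1 then
          (fun i => if i = 0 then b 0 - 1 else b i) i else 0) w +
          (if w = 0 then 1 else 0)) =
        rad k (fun i => if i < l' + 1 then b i else 0) := by
      funext w
      by_cases hw : w = 0
      · subst hw
        have := (hb 0 (by omega)).1
        simp only [rad, dep_zero hk]
        split_ifs <;> omega
      · have hdw : 1 ≤ dep k w := (dep_pos_iff hk w).1 (by omega)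
        simp only [rad, if_neg hw]
        split_ifs <;> omega
    rw [e1, e2] at step2
    exact step2
  · have hb01 : b 0 = 1 := by have := (hb 0 (by omega)).1; omega
    rcases Nat.lt_or_ge l 2 with hl2 | hl2
    · -- l = 1, N = 1 : already stable
      have hl1 : l = 1 := by omega
      subst hl1
      have hNval : N = 1 := by
        rw [hN, Finset.sum_range_one, pow_zero, mul_one, hb01]
      subst hNval
      have he : (fun w => if w = 0 then 1 else 0) =
          rad k (fun i => if i < 1 then b i else 0) := by
        funext w
        by_cases hw : w = 0
        · subst hw
          simp only [rad, dep_zero hk]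
          split_ifs <;> omega
        · have hdw : 1 ≤ dep k w := (dep_pos_iff hk w).1 (by omega)
          simp only [rad]
          split_ifs <;> omega
      rw [he]
    · by_cases hex : ∃ jj, jj < l ∧ 2 ≤ b jj
      · -- carry of length m = least index with digit ≥ 2
        set m := Nat.find hex with hmdef
        have hmspec : m < l ∧ 2 ≤ b m := Nat.find_spec hex
        have hmin : ∀ i, i < m → b i = 1 := by
          intro i hi
          have hni := Nat.find_min hex hi
          have := (hb i (by omega)).1
          omega
        have hm1 : 1 ≤ m := by
          by_contra h
          have hm0 : m = 0 := by omega
          rw [hm0] at hmspec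
          omega
        have hb'' : ∀ i, i < l →
            1 ≤ (fun i => if i < m then k else if i = m then b m - 1 else b i) i ∧
            (fun i => if i < m then k else if i = m then b m - 1 else b i) i ≤ k := by
          intro i hi
          try simp only []
          split_ifs with h1 h2
          · omega
          · have h3 := (hb m (by omega)).2
            omega
          · exact hb i hi
        have hsum' : N - 1 = ∑ i ∈ Finset.range l,
            (fun i => if i < m then k else if i = m then b m - 1 else b i) i * k ^ i := by
          have e0 : ∑ i ∈ Finset.range l, b i * k ^ i =
              ∑ i ∈ Finset.range (m + 1), b i * k ^ i +
              ∑ i ∈ Finset.Ico (m + 1) l, b i * k ^ i :=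
            (Finset.sum_range_add_sum_Ico _ (by omega)).symm
          have e0' : ∑ i ∈ Finset.range l,
              (fun i => if i < m then k else if i = m then b m - 1 else b i) i * k ^ i =
              ∑ i ∈ Finset.range (m + 1),
                (fun i => if i < m then k else if i = m then b m - 1 else b i) i * k ^ i +
              ∑ i ∈ Finset.Ico (m + 1) l,
                (fun i => if i < m then k else if i = m then b m - 1 else b i) i * k ^ i :=
            (Finset.sum_range_add_sum_Ico _ (by omega)).symm
          have etail : ∑ i ∈ Finset.Ico (m + 1) l,
              (fun i => if i < m then k else if i = m then b m - 1 else b i) i * k ^ i =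
              ∑ i ∈ Finset.Ico (m + 1) l, b i * k ^ i := by
            refine Finset.sum_congr rfl (fun i hi => ?_)
            rw [Finset.mem_Ico] at hi
            try simp only []
            rw [if_neg (by omega), if_neg (by omega)]
          have ehead : ∑ i ∈ Finset.range (m + 1), b i * k ^ i =
              Ncount k m + b m * k ^ m := by
            rw [Finset.sum_range_succ]
            congr 1
            rw [Ncount_sum hk]
            exact Finset.sum_congr rfl
              (fun i hi => by rw [hmin i (Finset.mem_range.1 hi), one_mul])
          have ehead' : ∑ i ∈ Finset.range (m + 1),
              (fun i => if i < m then k else if i = m then b m - 1 else b i) i * k ^ i =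
              k * Ncount k m + (b m - 1) * k ^ m := by
            rw [Finset.sum_range_succ]
            congr 1
            · rw [Ncount_sum hk, Finset.mul_sum]
              refine Finset.sum_congr rfl (fun i hi => ?_)
              try simp only []
              rw [if_pos (Finset.mem_range.1 hi)]
            · try simp only []
              split_ifs <;> omega
          have f1 : Ncount k (m + 1) = k * Ncount k m + 1 := Ncount_succ hk m
          have f2 : Ncount k (m + 1) = Ncount k m + k ^ m := Ncount_add_pow hk m
          have f3 : (b m - 1) * k ^ m = b m * k ^ m - 1 * k ^ m := Nat.sub_mul _ _ _
          rw [one_mul] at f3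
          have f4 : k ^ m ≤ b m * k ^ m := Nat.le_mul_of_pos_left _ (by omega)
          have f5 : 1 ≤ k ^ m := Nat.one_le_pow _ _ (by omega)
          rw [e0', ehead', etail]
          rw [e0, ehead] at hN
          omega
        have step := IH (N - 1) (by omega) l _ hl hb'' hsum'
        have step2 := reach_add (k := k) _ _ (fun w => if w = 0 then 1 else 0) step
        have e1 : (fun w => (if w = 0 then N - 1 else 0) + (if w = 0 then 1 else 0)) =
            (fun w => if w = 0 then N else 0) := by
          funext w; split_ifs <;> omega
        have e2 : (fun w => rad k (fun i => if i < l then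
              (fun i => if i < m then k else if i = m then b m - 1 else b i) i else 0) w +
              (if w = 0 then 1 else 0)) =
            rad k (fun i => if i = 0 then k + 1 else
              if i < l then (if i < m then k else if i = m then b m - 1 else b i) else 0) := by
          funext w
          by_cases hw : w = 0
          · subst hw
            simp only [rad, dep_zero hk]
            split_ifs <;> omega
          · have hdw : 1 ≤ dep k w := (dep_pos_iff hk w).1 (by omega)
            simp only [rad, if_neg hw]
            split_ifs <;> omega
        rw [e1, e2] at step2
        have step3 := cascade hk m
          (fun i => if i = 0 then k + 1 else
            if i < l then (if i < m then k else if i = m then b m - 1 else b i) else 0)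
          hm1 (by norm_num)
          (fun i hi1 hi2 => by
            have hml := hmspec.1
            try simp only []
            split_ifs <;> omega)
        have hfin : (fun i => if i < m then 1 else if i = m then
              (if m = 0 then k + 1 else
                if m < l then (if m < m then k else if m = m then b m - 1 else b m) else 0) + 1
            else if i = 0 then k + 1 else
              if i < l then (if i < m then k else if i = m then b m - 1 else b i) else 0) =
            (fun i => if i < l then b i else 0) := by
          funext i
          try simp only []
          by_cases h1 : i < m
          · have := hmin i h1
            have hml := hmspec.1
            split_ifs <;> omega
          · by_cases h2 : i = m
            · subst h2
              have hml := hmspec.1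
              have hbm := hmspec.2
              split_ifs <;> omega
            · have hml := hmspec.1
              split_ifs <;> omega
        rw [hfin] at step3
        exact step2.trans step3
      · -- all digits equal 1 : N = Ncount l
        push_neg at hex
        have hall : ∀ i, i < l → b i = 1 := by
          intro i hi
          have h1 := (hb i hi).1
          have h2 := hex i hi
          omega
        have hNval : N = Ncount k l := by
          rw [hN, Ncount_sum hk]
          exact Finset.sum_congr rfl
            (fun i hi => by rw [hall i (Finset.mem_range.1 hi), one_mul])
        have hll : l = (l - 1) + 1 := by omega
        have hsum' : N - 1 = ∑ i ∈ Finset.range (l - 1), (fun _ : ℕ => k) i * k ^ i := by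
          have f1 : Ncount k ((l - 1) + 1) = k * Ncount k (l - 1) + 1 := Ncount_succ hk _
          rw [hll] at hNval
          have : ∑ i ∈ Finset.range (l - 1), (fun _ : ℕ => k) i * k ^ i =
              k * Ncount k (l - 1) := by
            rw [Ncount_sum hk, Finset.mul_sum]
          omega
        have step := IH (N - 1) (by omega) (l - 1) _ (by omega)
          (fun i hi => ⟨by omega, le_rfl⟩) hsum'
        have step2 := reach_add (k := k) _ _ (fun w => if w = 0 then 1 else 0) step
        have e1 : (fun w => (if w = 0 then N - 1 else 0) + (if w = 0 then 1 else 0)) =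
            (fun w => if w = 0 then N else 0) := by
          funext w; split_ifs <;> omega
        have e2 : (fun w => rad k (fun i => if i < l - 1 then (fun _ : ℕ => k) i else 0) w +
              (if w = 0 then 1 else 0)) =
            rad k (fun i => if i = 0 then k + 1 else if i < l - 1 then k else 0) := by
          funext w
          by_cases hw : w = 0
          · subst hw
            simp only [rad, dep_zero hk]
            split_ifs <;> omega
          · have hdw : 1 ≤ dep k w := (dep_pos_iff hk w).1 (by omega)
            simp only [rad, if_neg hw]
            split_ifs <;> omega
        rw [e1, e2] at step2
        have step3 := cascade hk (l - 1)
          (fun i => if i = 0 then k + 1 else if i < l - 1 then k else 0)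
          (by omega) (by norm_num)
          (fun i hi1 hi2 => by (try simp only []); split_ifs <;> omega)
        have hfin : (fun i => if i < l - 1 then 1 else if i = l - 1 then
              (if l - 1 = 0 then k + 1 else if l - 1 < l - 1 then k else 0) + 1
            else if i = 0 then k + 1 else if i < l - 1 then k else 0) =
            (fun i => if i < l then b i else 0) := by
          funext i
          try simp only []
          by_cases h1 : i < l
          · have := hall i h1
            split_ifs <;> omega
          · split_ifs <;> omega
        rw [hfin] at step3
        exact step2.trans step3

end Main2

/-- Starting with `N` chips at the root, `(k^ℓ-1)/(k-1) ≤ N < (k^{ℓ+1}-1)/(k-1)`,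
any reachable stable configuration has `a_i + 1` chips on each vertex of layer
`i+1` for `0 ≤ i ≤ ℓ-1` (and no chips below layer `ℓ`), where
`a_{ℓ-1}⋯a_1a_0` is the base-`k` expansion of `N - (k^ℓ-1)/(k-1)`.
In particular `N = ∑_{i=0}^{ℓ-1} (a_i+1)·k^i`. -/
theorem stmt13 (k l N : ℕ) (a : ℕ → ℕ) (hk : 2 ≤ k) (hl : 1 ≤ l)
    (hN1 : Ncount k l ≤ N) (hN2 : N < Ncount k (l + 1))
    (ha : ∀ i, i < l → a i ≤ k - 1)
    (hexp : N - Ncount k l = ∑ i ∈ Finset.range l, a i * k ^ i)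
    (c : ℕ → ℕ)
    (hreach : Relation.ReflTransGen (UStep k) (fun w => if w = 0 then N else 0) c)
    (hstable : UStable k c) :
    (∀ i, i < l → ∀ v, Ncount k i ≤ v → v < Ncount k (i + 1) → c v = a i + 1) ∧
    (∀ v, Ncount k l ≤ v → c v = 0) ∧
    N = ∑ i ∈ Finset.range l, (a i + 1) * k ^ i := by
  have hNsum : N = ∑ i ∈ Finset.range l, (a i + 1) * k ^ i := by
    have h1 : ∑ i ∈ Finset.range l, (a i + 1) * k ^ i =
        ∑ i ∈ Finset.range l, a i * k ^ i + ∑ i ∈ Finset.range l, k ^ i := by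
      rw [← Finset.sum_add_distrib]
      exact Finset.sum_congr rfl (fun i _ => by ring)
    rw [h1, ← hexp, ← Ncount_sum hk]
    omega
  have hb : ∀ i, i < l → 1 ≤ a i + 1 ∧ a i + 1 ≤ k := by
    intro i hi
    have := ha i hi
    omega
  have hreach2 := reach hk N l (fun i => a i + 1) hl hb
    (by rw [hNsum])
  obtain ⟨d, hcd, htd⟩ := Relation.church_rosser
    (fun x y z h1 h2 => ustep_diamond x y z h1 h2) hreach hreach2
  have htgt_stable : UStable k (rad k fun i => if i < l then a i + 1 else 0) := by
    intro v
    simp only [rad]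
    split_ifs with h
    · exact (hb _ h).2
    · omega
  have h1 : d = c := stable_reach_eq _ _ hstable hcd
  have h2 : d = rad k (fun i => if i < l then a i + 1 else 0) :=
    stable_reach_eq _ _ htgt_stable htd
  have hc : c = rad k (fun i => if i < l then a i + 1 else 0) := by rw [← h1, h2]
  refine ⟨?_, ?_, hNsum⟩
  · intro i hi v hv1 hv2
    rw [hc]
    simp only [rad]
    rw [(dep_eq_iff hk i v).2 ⟨hv1, hv2⟩, if_pos hi]
  · intro v hv
    rw [hc]
    simp only [rad]
    rw [if_neg]
    intro hlt
    have hs := (dep_spec hk v).2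
    have := Ncount_mono hk (show dep k v + 1 ≤ l by omega)
    omega
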